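/- arXiv:1301.1360 — 2 statements merged into one kernel-verified Lean document; each statement's English description precedes it below -/
import Mathlib

section
/- Let m ≥ 3 and suppose real angles satisfy Σ_{k=1}^{m} δ_k = 2π with each δ_k ≥ 0, and 2·Σ_{k=1}^{m} sin(δ_k/2) ≥ 2m·sin(π/m) − s for some s > 0 small. Then there is a constant C depending only on m such that |δ_k − 2π/m| ≤ C·√s for all k. -/
open Real Finset

private lemma sin_cubic_lb {t : ℝ} (h0 : 0 ≤ t) (h1 : t ≤ Real.pi / 3) :
    t - 19/108 * t^3 ≤ Real.sin t := by
  rcases eq_or_lt_of_le h0 with h | h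
  · simp [← h]
  · have hπ : Real.pi < 3.15 := Real.pi_lt_d2
    have hπ3 : (3:ℝ) < Real.pi := Real.pi_gt_three
    have hs1 : t/3 ≤ 1 := by linarith
    have hs0 : 0 < t/3 := by linarith
    have h2 := Real.sin_gt_sub_cube hs0
    have h3 := Real.sin_le hs0.le
    have h4 := Real.sin_nonneg_of_nonneg_of_le_pi hs0.le (by linarith)
    have ht : Real.sin t = 3 * Real.sin (t/3) - 4 * Real.sin (t/3)^3 := by
      rw [show t = 3 * (t/3) by ring, Real.sin_three_mul]
      ring_nf
    rw [ht]
    nlinarith [pow_le_pow_left₀ h4 h3 3, sq_nonneg (Real.sin (t/3))]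

set_option maxHeartbeats 1600000 in
private lemma key_quad {a x : ℝ} (ha0 : 0 < a) (ha3 : a ≤ Real.pi / 3)
    (hx0 : 0 ≤ x) (hxπ : x ≤ Real.pi) :
    a/16 * (x - a)^2 ≤ Real.sin a + Real.cos a * (x - a) - Real.sin x := by
  have hπ3 : (3:ℝ) < Real.pi := Real.pi_gt_three
  have hπ' : Real.pi < 3.15 := Real.pi_lt_d2
  set u := (x - a)/2 with hu
  have hxa : x = a + 2*u := by rw [hu]; ring
  have hca : 0 ≤ Real.cos a := Real.cos_nonneg_of_mem_Icc ⟨by linarith, by linarith⟩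
  have hca1 : Real.cos a ≤ 1 := Real.cos_le_one a
  have hsa : a - 19/108 * a^3 ≤ Real.sin a := sin_cubic_lb ha0.le ha3
  have hsa0 : 0 ≤ Real.sin a := Real.sin_nonneg_of_nonneg_of_le_pi ha0.le (by linarith)
  have hid : Real.sin x = Real.sin a * (1 - 2 * Real.sin u ^ 2) + Real.cos a * Real.sin (2*u) := by
    rw [hxa, Real.sin_add, Real.cos_two_mul' u]
    linear_combination Real.sin a * (Real.sin_sq_add_cos_sq u)
  have hul : -(a/2) ≤ u := by rw [hu]; linarith
  have huu : u ≤ Real.pi/2 := by rw [hu]; linarith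
  have hmain : a/16 * (2*u)^2 ≤
      Real.cos a * (2*u - Real.sin (2*u)) + 2 * Real.sin a * Real.sin u ^ 2 := by
    rcases le_or_gt 0 u with hu0 | hu0
    · -- u ≥ 0
      have h2u : Real.sin (2*u) ≤ 2*u := Real.sin_le (by linarith)
      have hsu : 2/Real.pi * u ≤ Real.sin u := Real.mul_le_sin hu0 huu
      have h2pi : (0.63:ℝ) ≤ 2/Real.pi := by
        rw [le_div_iff₀ Real.pi_pos]; nlinarith
      have hsu' : 0.63*u ≤ Real.sin u := by
        nlinarith [mul_le_mul_of_nonneg_right h2pi hu0]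
      have hsa' : 0.63*a ≤ Real.sin a := by
        have := Real.mul_le_sin ha0.le (by linarith : a ≤ Real.pi/2)
        nlinarith [mul_le_mul_of_nonneg_right h2pi ha0.le]
      have hsq : (0.63*u)^2 ≤ Real.sin u ^ 2 :=
        pow_le_pow_left₀ (by positivity) hsu' 2
      have hBB : (0.63*a) * ((0.63*u)^2) ≤ Real.sin a * Real.sin u ^ 2 :=
        mul_le_mul hsa' hsq (by positivity) hsa0
      nlinarith [mul_nonneg hca (by linarith : (0:ℝ) ≤ 2*u - Real.sin (2*u))]
    · -- u < 0 ; set t = -2u ∈ (0, a]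
      set t := -(2*u) with htdef
      have ht0 : 0 < t := by rw [htdef]; linarith
      have hta : t ≤ a := by rw [htdef]; linarith
      have hs2u : Real.sin (2*u) = -Real.sin t := by
        rw [show 2*u = -t by rw [htdef]; ring, Real.sin_neg]
      have hsu2 : Real.sin u ^ 2 = Real.sin (t/2) ^ 2 := by
        rw [show u = -(t/2) by rw [htdef]; ring, Real.sin_neg]
        ring
      have hst : t - 19/108 * t^3 ≤ Real.sin t := sin_cubic_lb ht0.le (by linarith)
      have hst2 : Real.sin t ≤ t := Real.sin_le ht0.le
      have hA : -(19/108 * t^3) ≤ Real.cos a * (Real.sin t - t) := by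
        have h1 : Real.cos a * (t - Real.sin t) ≤ t - Real.sin t :=
          mul_le_of_le_one_left (by linarith) hca1
        nlinarith
      have ht105 : t ≤ 1.05 := by linarith
      have h05 : 0.45*t ≤ Real.sin (t/2) := by
        have H := sin_cubic_lb (by linarith : (0:ℝ) ≤ t/2) (by linarith : t/2 ≤ Real.pi/3)
        nlinarith [H, mul_nonneg (mul_nonneg ht0.le ht0.le) (sub_nonneg.2 ht105),
          mul_nonneg ht0.le (sub_nonneg.2 ht105)]
      have ha105 : a ≤ 1.05 := by linarith
      have hsa8 : 0.8*a ≤ Real.sin a := by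
        nlinarith [hsa, mul_nonneg (mul_nonneg ha0.le ha0.le) (sub_nonneg.2 ha105),
          mul_nonneg ha0.le (sub_nonneg.2 ha105)]
      have hsq : (0.45*t)^2 ≤ Real.sin (t/2) ^ 2 :=
        pow_le_pow_left₀ (by positivity) h05 2
      have hBB : (0.8*a) * ((0.45*t)^2) ≤ Real.sin a * Real.sin (t/2) ^ 2 :=
        mul_le_mul hsa8 hsq (by positivity) hsa0
      rw [hs2u, hsu2]
      nlinarith [mul_le_mul_of_nonneg_right hta (sq_nonneg t)]
  calc a/16 * (x - a)^2 = a/16 * (2*u)^2 := by rw [hu]; ring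
    _ ≤ _ := hmain
    _ = Real.sin a + Real.cos a * (x - a) - Real.sin x := by
        rw [hid, hxa]; ring

theorem near_max_perimeter_angles_close (m : ℕ) (hm : 3 ≤ m) :
    ∃ C > (0 : ℝ), ∃ ε > (0 : ℝ), ∀ (s : ℝ) (δ : Fin m → ℝ),
      0 < s → s < ε →
      (∀ k, 0 ≤ δ k) →
      (∑ k, δ k = 2 * Real.pi) →
      (2 * ∑ k, Real.sin (δ k / 2) ≥ 2 * m * Real.sin (Real.pi / m) - s) →
      ∀ k, |δ k - 2 * Real.pi / m| ≤ C * Real.sqrt s := by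
  have hmR : (3:ℝ) ≤ (m:ℝ) := by exact_mod_cast hm
  have hm0 : (0:ℝ) < (m:ℝ) := by linarith
  refine ⟨8 * Real.sqrt m, by positivity, 1, one_pos, ?_⟩
  intro s δ hs hs1 hδ0 hsum hper k
  have hπ := Real.pi_pos
  set a := Real.pi / m with ha_def
  have ha0 : 0 < a := div_pos hπ hm0
  have ha3 : a ≤ Real.pi/3 := by
    rw [ha_def, div_le_div_iff₀ hm0 (by norm_num)]
    nlinarith
  have hma : (m:ℝ) * a = Real.pi := by
    rw [ha_def]; field_simp
  have hδle : ∀ j, δ j ≤ 2 * Real.pi := by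
    intro j
    have := Finset.single_le_sum (f := δ) (fun i _ => hδ0 i) (Finset.mem_univ j)
    linarith [hsum ▸ this]
  have hkey : ∀ j, a/16 * (δ j / 2 - a)^2 ≤
      Real.sin a + Real.cos a * (δ j / 2 - a) - Real.sin (δ j / 2) := by
    intro j
    exact key_quad ha0 ha3 (by linarith [hδ0 j]) (by linarith [hδle j])
  have h1 : ∑ j, (δ j / 2) = Real.pi := by
    rw [← Finset.sum_div, hsum]; ring
  have hS : ∑ j, (Real.sin a + Real.cos a * (δ j / 2 - a) - Real.sin (δ j / 2))
      = (m:ℝ) * Real.sin a - ∑ j, Real.sin (δ j / 2) := by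
    rw [Finset.sum_sub_distrib, Finset.sum_add_distrib, ← Finset.mul_sum,
      Finset.sum_sub_distrib, h1, Finset.sum_const, Finset.sum_const,
      Finset.card_univ, Fintype.card_fin, nsmul_eq_mul, nsmul_eq_mul, hma]
    ring
  have hterm : a/16 * (δ k / 2 - a)^2 ≤ s/2 := by
    have hle : (Real.sin a + Real.cos a * (δ k / 2 - a) - Real.sin (δ k / 2))
        ≤ ∑ j, (Real.sin a + Real.cos a * (δ j / 2 - a) - Real.sin (δ j / 2)) := by
      apply Finset.single_le_sum (fun j _ => le_trans (by positivity) (hkey j))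
        (Finset.mem_univ k)
    have := hkey k
    rw [hS] at hle
    linarith [hper]
  have h64 : (δ k - 2 * Real.pi / m)^2 ≤ 64 * m * s := by
    have h2a : δ k - 2 * Real.pi / m = 2 * (δ k / 2 - a) := by
      rw [ha_def]; ring
    rw [h2a]
    have hX : a * (δ k / 2 - a)^2 ≤ 8 * s := by linarith
    -- 4 * X ≤ 64 m s, since a*X ≤ 8s and m*a = π ≥ 3 so m*s*a = π*s
    have hπ3 : (3:ℝ) < Real.pi := Real.pi_gt_three
    have hXa : (δ k / 2 - a)^2 ≤ 8 * s / a := by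
      rw [le_div_iff₀ ha0]; linarith [hX]
    have : 8 * s / a = 8 * s * m / Real.pi := by
      rw [ha_def]; field_simp
    nlinarith [sq_nonneg (δ k / 2 - a), mul_pos hs hm0]
  have hsq : (8 * Real.sqrt m * Real.sqrt s)^2 = 64 * m * s := by
    rw [mul_pow, mul_pow, Real.sq_sqrt hm0.le, Real.sq_sqrt hs.le]
    ring
  calc |δ k - 2 * Real.pi / m| = Real.sqrt ((δ k - 2 * Real.pi / m)^2) :=
        (Real.sqrt_sq_eq_abs _).symm
    _ ≤ Real.sqrt ((8 * Real.sqrt m * Real.sqrt s)^2) := by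
        apply Real.sqrt_le_sqrt; rw [hsq]; exact h64
    _ = 8 * Real.sqrt m * Real.sqrt s := Real.sqrt_sq (by positivity)
end

section
/- For m ≥ 2 and s > 0, the volume of the ellipsoid {y ∈ ℝ^{m-1} : Σ_{k=1}^{m-1} (1 − cos(πk/m))·y_k² ≤ 2s/sin(π/m)} equals (π^{(m-1)/2} / Γ((m+1)/2)) · 2^{m-1} · s^{(m-1)/2} / (√m · (sin(π/m))^{(m-1)/2}). -/
open Real MeasureTheory

section Aux
open Finset


open Finset Polynomial in
lemma prod_one_sub_zpow {n : ℕ} (hn : 0 < n) {ζ : ℂ} (hζ : IsPrimitiveRoot ζ n) :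
    ∏ k ∈ Finset.Ico 1 n, (1 - ζ ^ k) = n := by
  have hp := X_pow_sub_C_eq_prod hζ hn (one_pow n)
  simp only [mul_one, map_one] at hp
  rw [Finset.range_eq_Ico, Finset.prod_eq_prod_Ico_succ_bot hn, pow_zero, map_one] at hp
  have hg : (X - 1 : ℂ[X]) * ∑ i ∈ range n, X ^ i = X ^ n - 1 := by
    rw [mul_comm]; exact geom_sum_mul X n
  have hP : (∑ i ∈ range n, (X:ℂ[X]) ^ i) = ∏ i ∈ Finset.Ico 1 n, (X - C (ζ ^ i)) := by
    apply mul_left_cancel₀ (a := (X - 1 : ℂ[X]))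
    · simpa using X_sub_C_ne_zero (1 : ℂ)
    · rw [hg, hp]
  have := congrArg (Polynomial.eval 1) hP
  simpa [eval_prod] using this.symm

open Complex in



lemma prod_two_sub_two_cos {m : ℕ} (hm : 2 ≤ m) :
    ∏ k ∈ Finset.Ico 1 m, (2 - 2 * Real.cos (π * k / m)) = m := by
  set ζ : ℂ := Complex.exp (2 * π * Complex.I / (2 * m)) with hζdef
  have h2m : (2 * m : ℕ) ≠ 0 := by omega
  have hζ : IsPrimitiveRoot ζ (2 * m) := by
    have := Complex.isPrimitiveRoot_exp (2 * m) h2m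
    rw [hζdef]; convert this using 3; push_cast; ring
  have key := prod_one_sub_zpow (n := 2 * m) (by omega) hζ
  -- split the product
  have hsplit : ∏ k ∈ Finset.Ico 1 (2 * m), (1 - ζ ^ k)
      = (∏ k ∈ Finset.Ico 1 m, (1 - ζ ^ k)) * ((1 - ζ ^ m) *
        ∏ k ∈ Finset.Ico (m + 1) (2 * m), (1 - ζ ^ k)) := by
    rw [← Finset.prod_Ico_consecutive _ (by omega : 1 ≤ m) (by omega : m ≤ 2 * m),
      Finset.prod_eq_prod_Ico_succ_bot (by omega : m < 2 * m)]
  have hrefl : ∏ k ∈ Finset.Ico (m + 1) (2 * m), (1 - ζ ^ k)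
      = ∏ k ∈ Finset.Ico 1 m, (1 - ζ ^ (2 * m - k)) := by
    apply Finset.prod_bij' (i := fun k _ => 2 * m - k) (j := fun k _ => 2 * m - k)
    · intro k hk; simp only [Finset.mem_Ico] at *; omega
    · intro k hk; simp only [Finset.mem_Ico] at *; omega
    · intro k hk; simp only [Finset.mem_Ico] at hk; congr 1; omega
    · intro k hk; simp only [Finset.mem_Ico] at hk; congr 1; omega
    · intro k hk; simp only [Finset.mem_Ico] at hk; congr 2; omega
  have hζm : ζ ^ m = -1 := by
    have h2 : (ζ ^ m) ^ 2 = 1 := by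
      rw [← pow_mul, mul_comm m 2]; exact hζ.pow_eq_one
    have hne : ζ ^ m ≠ 1 := by
      intro h
      have := hζ.pow_ne_one_of_pos_of_lt (by omega : m ≠ 0) (by omega : m < 2 * m)
      exact this h
    have : (ζ ^ m - 1) * (ζ ^ m + 1) = 0 := by linear_combination h2
    rcases mul_eq_zero.mp this with h | h
    · exact absurd (sub_eq_zero.mp h) hne
    · linear_combination h
  have hmC : (m : ℂ) ≠ 0 := Nat.cast_ne_zero.mpr (by omega)
  have hpair : ∀ k ∈ Finset.Ico 1 m,
      (1 - ζ ^ k) * (1 - ζ ^ (2 * m - k)) = ((2 - 2 * Real.cos (π * k / m) : ℝ) : ℂ) := by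
    intro k hk
    simp only [Finset.mem_Ico] at hk
    have hinv : ζ ^ k * ζ ^ (2 * m - k) = 1 := by
      rw [← pow_add, show k + (2 * m - k) = 2 * m by omega]; exact hζ.pow_eq_one
    have hk1 : ζ ^ k = Complex.exp (((π * k / m : ℝ) : ℂ) * Complex.I) := by
      rw [hζdef, ← Complex.exp_nat_mul]
      congr 1
      push_cast
      field_simp
    have hk2 : ζ ^ (2 * m - k) = Complex.exp (-(((π * k / m : ℝ) : ℂ) * Complex.I)) := by
      rw [show ζ ^ (2 * m - k) = (ζ ^ k)⁻¹ from
        eq_inv_of_mul_eq_one_left (by rw [mul_comm]; exact hinv), hk1, ← Complex.exp_neg]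
    have hcos := Complex.two_cos (((π * k / m : ℝ) : ℂ))
    rw [neg_mul] at hcos
    have hprod : Complex.exp ((((π * k / m : ℝ)) : ℂ) * Complex.I) *
        Complex.exp (-((((π * k / m : ℝ)) : ℂ) * Complex.I)) = 1 := by
      rw [← Complex.exp_add]; simp
    have hcast : (((2 - 2 * Real.cos (π * k / m)) : ℝ) : ℂ)
        = 2 - 2 * Complex.cos (((π * k / m : ℝ) : ℂ)) := by
      push_cast [Complex.ofReal_cos]; ring
    rw [hk1, hk2, hcast]
    linear_combination hprod + hcos
  rw [hsplit, hrefl, hζm] at key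
  have key2 : (∏ k ∈ Finset.Ico 1 m, ((1 - ζ ^ k) * (1 - ζ ^ (2 * m - k)))) * 2
      = ((2 * m : ℕ) : ℂ) := by
    rw [Finset.prod_mul_distrib]; linear_combination key
  rw [Finset.prod_congr rfl hpair, ← Complex.ofReal_prod] at key2
  have hr : (∏ k ∈ Finset.Ico 1 m, (2 - 2 * Real.cos (π * k / m))) * 2 = 2 * m := by
    exact_mod_cast key2
  linarith




lemma prod_one_sub_cos {m : ℕ} (hm : 2 ≤ m) :
    ∏ k : Fin (m - 1), (1 - Real.cos (π * ((k : ℕ) + 1) / m)) = m / 2 ^ (m - 1) := by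
  have h := prod_two_sub_two_cos hm
  have h1 : ∏ k ∈ Finset.Ico 1 m, (2 - 2 * Real.cos (π * k / m))
      = 2 ^ (m - 1) * ∏ k ∈ Finset.Ico 1 m, (1 - Real.cos (π * k / m)) := by
    have hc : ∀ k ∈ Finset.Ico 1 m, (2 - 2 * Real.cos (π * k / m))
        = 2 * (1 - Real.cos (π * k / m)) := fun k _ => by ring
    rw [Finset.prod_congr rfl hc, Finset.prod_mul_distrib,
      Finset.prod_const, Nat.card_Ico]
  have h2 : ∏ k : Fin (m - 1), (1 - Real.cos (π * ((k : ℕ) + 1) / m))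
      = ∏ k ∈ Finset.Ico 1 m, (1 - Real.cos (π * k / m)) := by
    rw [Fin.prod_univ_eq_prod_range (fun i => 1 - Real.cos (π * ((i : ℕ) + 1) / m)),
      Finset.prod_Ico_eq_prod_range]
    apply Finset.prod_congr rfl
    intro i _
    norm_num
    congr 2
    push_cast
    ring
  rw [h2]
  have hpow : (2 : ℝ) ^ (m - 1) ≠ 0 := by positivity
  field_simp
  linarith [h1.symm.trans h]



lemma sqrt_pow_eq_rpow {x : ℝ} (hx : 0 ≤ x) (N : ℕ) :
    Real.sqrt x ^ N = x ^ ((N : ℝ) / 2) := by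
  rw [Real.sqrt_eq_rpow, ← Real.rpow_natCast (x ^ (1/2 : ℝ)) N, ← Real.rpow_mul hx]
  ring_nf

lemma sqrt_prod' {ι : Type*} (t : Finset ι) (f : ι → ℝ) (h : ∀ i ∈ t, 0 ≤ f i) :
    Real.sqrt (∏ i ∈ t, f i) = ∏ i ∈ t, Real.sqrt (f i) := by
  induction t using Finset.cons_induction with
  | empty => simp
  | cons i t hi ih =>
    rw [Finset.prod_cons, Finset.prod_cons,
      Real.sqrt_mul (h i (Finset.mem_cons_self i t)), ih (fun j hj => h j (Finset.mem_cons_of_mem hj))]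


theorem ellipsoid_volume (m : ℕ) (hm : 2 ≤ m) (s : ℝ) (hs : 0 < s) :
    volume {y : EuclideanSpace ℝ (Fin (m - 1)) |
        ∑ k : Fin (m - 1), (1 - Real.cos (Real.pi * ((k : ℕ) + 1) / m)) * y k ^ 2 ≤
          2 * s / Real.sin (Real.pi / m)} =
      ENNReal.ofReal
        (Real.pi ^ (((m : ℝ) - 1) / 2) / Real.Gamma (((m : ℝ) + 1) / 2) *
          2 ^ (m - 1) * s ^ (((m : ℝ) - 1) / 2) /
            (Real.sqrt m * Real.sin (Real.pi / m) ^ (((m : ℝ) - 1) / 2))) := by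
  have hm1 : (1 : ℝ) < m := by exact_mod_cast hm.trans_lt' one_lt_two
  have hsin : 0 < Real.sin (π / m) :=
    Real.sin_pos_of_pos_of_lt_pi (by positivity) (div_lt_self Real.pi_pos hm1)
  set a : Fin (m - 1) → ℝ := fun k => 1 - Real.cos (π * ((k : ℕ) + 1) / m) with ha
  have hapos : ∀ k, 0 < a k := by
    intro k
    have hk1 : (0 : ℝ) < π * ((k : ℕ) + 1) / m := by positivity
    have hk2 : π * ((k : ℕ) + 1) / m < π := by
      rw [div_lt_iff₀ (by positivity)]
      have : ((k : ℕ) : ℝ) + 1 < m := by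
        have := k.2
        have : (k : ℕ) + 1 < m := by omega
        exact_mod_cast this
      nlinarith [Real.pi_pos]
    have hsinθ := Real.sin_pos_of_pos_of_lt_pi hk1 hk2
    have := Real.sin_sq_add_cos_sq (π * ((k : ℕ) + 1) / m)
    have hle := Real.neg_one_le_cos (π * ((k : ℕ) + 1) / m)
    simp only [ha]
    nlinarith
  set R : ℝ := 2 * s / Real.sin (π / m) with hR
  have hRpos : 0 < R := by positivity
  set d : Fin (m - 1) → ℝ := fun k => Real.sqrt (a k) with hd
  set e := WithLp.linearEquiv 2 ℝ (Fin (m - 1) → ℝ) with he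
  set g : (Fin (m - 1) → ℝ) →ₗ[ℝ] (Fin (m - 1) → ℝ) := Matrix.toLin' (Matrix.diagonal d) with hg
  set f : EuclideanSpace ℝ (Fin (m - 1)) →ₗ[ℝ] EuclideanSpace ℝ (Fin (m - 1)) :=
    (e.symm : (Fin (m - 1) → ℝ) →ₗ[ℝ] EuclideanSpace ℝ (Fin (m - 1))) ∘ₗ g ∘ₗ
      (e : EuclideanSpace ℝ (Fin (m - 1)) →ₗ[ℝ] (Fin (m - 1) → ℝ)) with hf
  have hdet : LinearMap.det f = ∏ k, d k := by
    have h1 : f = (e.symm : (Fin (m-1) → ℝ) →ₗ[ℝ] _) ∘ₗ g ∘ₗ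
        ((e.symm).symm : _ →ₗ[ℝ] (Fin (m-1) → ℝ)) := by rw [LinearEquiv.symm_symm]
    rw [h1, LinearMap.det_conj g e.symm, hg, LinearMap.det_toLin', Matrix.det_diagonal]
  have hdpos : 0 < ∏ k, d k := Finset.prod_pos fun k _ => Real.sqrt_pos.mpr (hapos k)
  have hfy : ∀ (y : EuclideanSpace ℝ (Fin (m - 1))) (k : Fin (m - 1)), f y k = d k * y k := by
    intro y k
    simp only [hf, hg, LinearMap.coe_comp, Function.comp_apply, LinearEquiv.coe_coe,
      Matrix.toLin'_apply]
    exact Matrix.mulVec_diagonal d (e y) k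
  have hset : {y : EuclideanSpace ℝ (Fin (m - 1)) |
      ∑ k : Fin (m - 1), (1 - Real.cos (π * ((k : ℕ) + 1) / m)) * y k ^ 2 ≤ R}
      = f ⁻¹' (Metric.closedBall 0 (Real.sqrt R)) := by
    ext y
    simp only [Set.mem_setOf_eq, Set.mem_preimage, Metric.mem_closedBall, dist_zero_right]
    rw [EuclideanSpace.norm_eq]
    have hnorm : ∑ i, ‖f y i‖ ^ 2 = ∑ k : Fin (m - 1), (1 - Real.cos (π * ((k : ℕ) + 1) / m)) * y k ^ 2 := by
      apply Finset.sum_congr rfl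
      intro i _
      rw [hfy, Real.norm_eq_abs, sq_abs, mul_pow, hd]
      rw [Real.sq_sqrt (hapos i).le]
    rw [hnorm, Real.sqrt_le_sqrt_iff hRpos.le]
  haveI : Nonempty (Fin (m - 1)) := ⟨⟨0, by omega⟩⟩
  have hcard : Fintype.card (Fin (m - 1)) = m - 1 := Fintype.card_fin _
  rw [show {y : EuclideanSpace ℝ (Fin (m - 1)) |
      ∑ k : Fin (m - 1), (1 - Real.cos (Real.pi * ((k : ℕ) + 1) / m)) * y k ^ 2 ≤
        2 * s / Real.sin (Real.pi / m)} = f ⁻¹' (Metric.closedBall 0 (Real.sqrt R)) from hset,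
    Measure.addHaar_preimage_linearMap volume (by rw [hdet]; exact hdpos.ne') _,
    EuclideanSpace.volume_closedBall, hdet, hcard]
  rw [← ENNReal.ofReal_pow (Real.sqrt_nonneg R),
    ← ENNReal.ofReal_mul (by positivity),
    ← ENNReal.ofReal_mul (by positivity)]
  congr 1
  -- now a real-number identity
  have hNc : ((m - 1 : ℕ) : ℝ) = (m : ℝ) - 1 := by
    have : 1 ≤ m := by omega
    push_cast [this]
    ring
  set q : ℝ := ((m : ℝ) - 1) / 2 with hq
  have hprodd : ∏ k, d k = Real.sqrt ((m : ℝ) / 2 ^ (m - 1)) := by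
    rw [hd, ← sqrt_prod' _ _ (fun i _ => (hapos i).le)]
    congr 1
    exact prod_one_sub_cos hm
  have hGammaArg : ((m - 1 : ℕ) : ℝ) / 2 + 1 = ((m : ℝ) + 1) / 2 := by rw [hNc]; ring
  have hGpos : 0 < Real.Gamma (((m : ℝ) + 1) / 2) :=
    Real.Gamma_pos_of_pos (by positivity)
  have hsqrtR : Real.sqrt R ^ (m - 1) = 2 ^ q * s ^ q / Real.sin (π / m) ^ q := by
    rw [sqrt_pow_eq_rpow hRpos.le, hNc, hR,
      Real.div_rpow (by positivity) hsin.le, Real.mul_rpow (by norm_num) hs.le]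
  have hsqrtpi : Real.sqrt π ^ (m - 1) = π ^ q := by
    rw [sqrt_pow_eq_rpow Real.pi_pos.le, hNc]
  have hsqrtm : Real.sqrt ((m : ℝ) / 2 ^ (m - 1)) = Real.sqrt m / 2 ^ q := by
    rw [Real.sqrt_div (by positivity : (0:ℝ) ≤ (m:ℝ)) ((2:ℝ) ^ (m-1))]
    congr 1
    rw [Real.sqrt_eq_rpow, ← Real.rpow_natCast 2 (m-1), ← Real.rpow_mul (by norm_num)]
    congr 1
    rw [hNc, hq]
    ring
  have h2q : (2 : ℝ) ^ q * 2 ^ q = 2 ^ (m - 1) := by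
    rw [← Real.rpow_add (by norm_num : (0:ℝ) < 2), hq]
    rw [show ((m:ℝ) - 1) / 2 + ((m:ℝ) - 1) / 2 = ((m - 1 : ℕ) : ℝ) by rw [hNc]; ring,
      Real.rpow_natCast]
  rw [hprodd, hsqrtR, hsqrtpi, hsqrtm, hGammaArg]
  have hsm : (0:ℝ) < Real.sqrt m := Real.sqrt_pos.mpr (by positivity)
  have h2qpos : (0:ℝ) < (2:ℝ) ^ q := Real.rpow_pos_of_pos (by norm_num) q
  have hsinq : (0:ℝ) < Real.sin (π / m) ^ q := Real.rpow_pos_of_pos hsin q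
  rw [abs_of_pos (by positivity)]
  rw [← h2q]
  field_simp

end Aux
end
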